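/- (Edmundson–Madansky inequality) Let f : ℝ → ℝ be convex and X a random variable with a ≤ X ≤ A almost surely, a < A, with mean μ = E[X]. Then E[f(X)] ≤ ((A-μ)/(A-a))·f(a) + ((μ-a)/(A-a))·f(A). -/

import Mathlib

open MeasureTheory

/-- Edmundson–Madansky inequality. -/
theorem edmundson_madansky {Ω : Type*} [MeasurableSpace Ω]
    (μ : Measure Ω) [IsProbabilityMeasure μ]
    (a A : ℝ) (haA : a < A)
    (f : ℝ → ℝ) (hf : ConvexOn ℝ (Set.Icc a A) f)
    (X : Ω → ℝ)
    (hX : ∀ᵐ ω ∂μ, X ω ∈ Set.Icc a A)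
    (hXint : Integrable X μ) (hfX : Integrable (fun ω => f (X ω)) μ) :
    (∫ ω, f (X ω) ∂μ)
      ≤ ((A - ∫ ω, X ω ∂μ) / (A - a)) * f a + (((∫ ω, X ω ∂μ) - a) / (A - a)) * f A := by
  have hAa : (0:ℝ) < A - a := by linarith
  have hAa' : A - a ≠ 0 := ne_of_gt hAa
  -- pointwise bound
  have key : ∀ x ∈ Set.Icc a A,
      f x ≤ (A * f a - a * f A) / (A - a) + x * ((f A - f a) / (A - a)) := by
    intro x hx
    have ht : 0 ≤ (A - x) / (A - a) := div_nonneg (by linarith [hx.2]) hAa.le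
    have hs : 0 ≤ (x - a) / (A - a) := div_nonneg (by linarith [hx.1]) hAa.le
    have hts : (A - x) / (A - a) + (x - a) / (A - a) = 1 := by
      field_simp
      ring
    have := hf.2 (Set.left_mem_Icc.2 haA.le) (Set.right_mem_Icc.2 haA.le) ht hs hts
    have hcomb : ((A - x) / (A - a)) • a + ((x - a) / (A - a)) • A = x := by
      simp only [smul_eq_mul]
      field_simp
      ring
    rw [hcomb] at this
    calc f x ≤ ((A - x) / (A - a)) • f a + ((x - a) / (A - a)) • f A := this
      _ = (A * f a - a * f A) / (A - a) + x * ((f A - f a) / (A - a)) := by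
          simp only [smul_eq_mul]; field_simp; ring
  have hg : Integrable (fun ω => (A * f a - a * f A) / (A - a)
      + X ω * ((f A - f a) / (A - a))) μ :=
    (integrable_const _).add (hXint.mul_const _)
  have hmono : (∫ ω, f (X ω) ∂μ)
      ≤ ∫ ω, ((A * f a - a * f A) / (A - a) + X ω * ((f A - f a) / (A - a))) ∂μ := by
    refine integral_mono_ae hfX hg ?_
    filter_upwards [hX] with ω hω using key _ hω
  have hcalc : (∫ ω, ((A * f a - a * f A) / (A - a)
      + X ω * ((f A - f a) / (A - a))) ∂μ)
      = (A * f a - a * f A) / (A - a) + (∫ ω, X ω ∂μ) * ((f A - f a) / (A - a)) := by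
    rw [integral_add (integrable_const _) (hXint.mul_const _), integral_const,
      integral_mul_const]
    simp
  rw [hcalc] at hmono
  refine hmono.trans_eq ?_
  field_simp
  ring
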